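/- Let y_0, t_0 and t be natural numbers with t >= t_0. If every colouring f_0 of H_{2t_0+2} with t_{f_0} = t_0 satisfies winst(f_0) >= y_0, then every colouring f of H_{2t+2} with t_f = t satisfies winst(f) >= y_0 + t - t_0; that is, if winst(2t_0+2, t_0) >= y_0 then winst(2t+2, t) >= y_0 + t - t_0. -/

import Mathlib

open Finset

/-- The number of entries of a point of the hypercube equal to `1` (`true`). -/
def onesCount {n : ℕ} (x : Fin n → Bool) : ℕ :=
  (univ.filter fun i => x i = true).card

/-- The number of entries of a point of the hypercube equal to `0` (`false`). -/
def zerosCount {n : ℕ} (x : Fin n → Bool) : ℕ :=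
  (univ.filter fun i => x i = false).card

/-- `P` is a geodesic in the `n`-hypercube: consecutive points differ in exactly one
entry, and each of the `n` entries changes at exactly one step. -/
def IsGeodesic {n : ℕ} (P : Fin (n+1) → Fin n → Bool) : Prop :=
  ∃ σ : Equiv.Perm (Fin n), ∀ j : Fin n, ∀ ℓ : Fin n,
    P j.succ ℓ = if σ ℓ = j then !(P j.castSucc ℓ) else P j.castSucc ℓ

/-- The number of jumps of the geodesic `P` in the colouring `f`. -/
def jumps {n : ℕ} (f : (Fin n → Bool) → Bool) (P : Fin (n+1) → Fin n → Bool) : ℕ :=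
  (univ.filter fun j : Fin n => f (P j.succ) ≠ f (P j.castSucc)).card

/-- `inst f` is the maximum of `jumps f P` over all geodesics `P`. -/
noncomputable def inst {n : ℕ} (f : (Fin n → Bool) → Bool) : ℕ :=
  sSup {m | ∃ P : Fin (n+1) → Fin n → Bool, IsGeodesic P ∧ m = jumps f P}

/-- `f` respects the balls `B_t(0^n)` and `B_t(1^n)`: it is `0` on all points with at
most `t` ones and `1` on all points with at most `t` zeros. -/
def Respects {n : ℕ} (t : ℕ) (f : (Fin n → Bool) → Bool) : Prop :=
  (∀ x, onesCount x ≤ t → f x = false) ∧ (∀ x, zerosCount x ≤ t → f x = true)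

/-- `t_f = t`: `t` is the largest radius whose balls `f` respects. -/
def tfEq {n : ℕ} (f : (Fin n → Bool) → Bool) (t : ℕ) : Prop :=
  Respects t f ∧ ¬ Respects (t+1) f

/-- `winst t f`: the maximum number of jumps of `f` over all well-ending
`(t+1)`-geodesics (those starting with exactly `t+1` ones, whose first point has
colour `1` or whose last point has colour `0`). -/
noncomputable def winst {n : ℕ} (t : ℕ) (f : (Fin n → Bool) → Bool) : ℕ :=
  sSup {m | ∃ P : Fin (n+1) → Fin n → Bool, IsGeodesic P ∧ onesCount (P 0) = t + 1 ∧
    (f (P 0) = true ∨ f (P (Fin.last n)) = false) ∧ m = jumps f P}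

lemma onesCount_eq_sum {n : ℕ} (x : Fin n → Bool) :
    onesCount x = ∑ i, if x i = true then 1 else 0 := by
  unfold onesCount; rw [Finset.card_filter]

lemma onesCount_add_zerosCount {n : ℕ} (x : Fin n → Bool) :
    onesCount x + zerosCount x = n := by
  classical
  have := Finset.card_filter_add_card_filter_not
    (s := (univ : Finset (Fin n))) (p := fun i => x i = true)
  simp only [Finset.card_univ, Fintype.card_fin] at this
  have h2 : (univ.filter fun i => ¬ x i = true) = (univ.filter fun i => x i = false) := by
    apply Finset.filter_congr; intro i _; simp
  rw [onesCount, zerosCount, ← h2]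
  exact this

lemma onesCount_le {n : ℕ} (x : Fin n → Bool) : onesCount x ≤ n := by
  have h := Finset.card_filter_le (univ : Finset (Fin n)) (fun i => x i = true)
  simpa [onesCount] using h

/-- extension of a point by two coordinates -/
def extPt {n : ℕ} (u v : Bool) (x : Fin n → Bool) : Fin (n+2) → Bool :=
  fun i => if h : (i : ℕ) < n then x ⟨i, h⟩ else if (i : ℕ) = n then u else v

lemma extPt_lt {n : ℕ} (u v : Bool) (x : Fin n → Bool) (i : Fin (n+2)) (h : (i:ℕ) < n) :
    extPt u v x i = x ⟨i, h⟩ := by simp [extPt, h]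

lemma extPt_n {n : ℕ} (u v : Bool) (x : Fin n → Bool) (i : Fin (n+2)) (h : (i:ℕ) = n) :
    extPt u v x i = u := by simp [extPt, h]

lemma extPt_n1 {n : ℕ} (u v : Bool) (x : Fin n → Bool) (i : Fin (n+2)) (h : (i:ℕ) = n+1) :
    extPt u v x i = v := by
  have h' : ¬ (i:ℕ) < n := by omega
  simp [extPt, h', h]

lemma onesCount_extPt {n : ℕ} (u v : Bool) (x : Fin n → Bool) :
    onesCount (extPt u v x) = onesCount x + (if u then 1 else 0) + (if v then 1 else 0) := by
  rw [onesCount_eq_sum, onesCount_eq_sum]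
  rw [Fin.sum_univ_castSucc (n := n+1), Fin.sum_univ_castSucc (n := n)]
  have h1 : extPt u v x (Fin.last (n+1)) = v := extPt_n1 _ _ _ _ (by simp)
  have h3 : extPt u v x (Fin.castSucc (Fin.last n)) = u := extPt_n _ _ _ _ (by simp)
  rw [h1, h3]
  have h2 : ∀ i : Fin n, (if extPt u v x ((Fin.castSucc i).castSucc) = true then 1 else 0)
      = (if x i = true then (1:ℕ) else 0) := by
    intro i
    rw [extPt_lt u v x _ (by simp)]
    simp
  rw [Finset.sum_congr rfl (fun i _ => h2 i)]


lemma zerosCount_eq {n : ℕ} (x : Fin n → Bool) : zerosCount x = n - onesCount x := by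
  have := onesCount_add_zerosCount x; omega

lemma sum_indicator_lt {n k : ℕ} (hk : k ≤ n) :
    (∑ i ∈ Finset.range n, if i < k then (1:ℕ) else 0) = k := by
  induction n with
  | zero => simp; omega
  | succ m ih =>
    rcases Nat.lt_or_ge m k with h | h
    · have hk' : k = m + 1 := by omega
      subst hk'
      rw [Finset.sum_range_succ]
      have : ∑ i ∈ Finset.range m, (if i < m + 1 then (1:ℕ) else 0)
          = ∑ _i ∈ Finset.range m, 1 := by
        apply Finset.sum_congr rfl; intro i hi
        simp only [Finset.mem_range] at hi
        simp [show i < m + 1 by omega]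
      rw [this]; simp
    · rw [Finset.sum_range_succ, ih h]
      simp [show ¬ m < k by omega]

lemma exists_onesCount {n k : ℕ} (hk : k ≤ n) : ∃ x : Fin n → Bool, onesCount x = k := by
  refine ⟨fun i => decide ((i:ℕ) < k), ?_⟩
  rw [onesCount_eq_sum]
  simp only [decide_eq_true_eq]
  rw [Fin.sum_univ_eq_sum_range (fun i => if i < k then 1 else 0)]
  exact sum_indicator_lt hk

lemma jumps_le {n : ℕ} (f : (Fin n → Bool) → Bool) (P : Fin (n+1) → Fin n → Bool) :
    jumps f P ≤ n := by
  have h := Finset.card_filter_le (univ : Finset (Fin n))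
    (fun j : Fin n => f (P j.succ) ≠ f (P j.castSucc))
  simpa [jumps] using h

def winstSet {n : ℕ} (t : ℕ) (f : (Fin n → Bool) → Bool) : Set ℕ :=
  {m | ∃ P : Fin (n+1) → Fin n → Bool, IsGeodesic P ∧ onesCount (P 0) = t + 1 ∧
    (f (P 0) = true ∨ f (P (Fin.last n)) = false) ∧ m = jumps f P}

lemma winst_eq_sSup {n : ℕ} (t : ℕ) (f : (Fin n → Bool) → Bool) :
    winst t f = sSup (winstSet t f) := rfl

lemma winstSet_bdd {n : ℕ} (t : ℕ) (f : (Fin n → Bool) → Bool) :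
    BddAbove (winstSet t f) := by
  refine ⟨n, ?_⟩
  rintro m ⟨P, _, _, _, rfl⟩
  exact jumps_le f P

lemma le_winst {n : ℕ} (t : ℕ) (f : (Fin n → Bool) → Bool)
    (P : Fin (n+1) → Fin n → Bool) (hP : IsGeodesic P) (h1 : onesCount (P 0) = t + 1)
    (h2 : f (P 0) = true ∨ f (P (Fin.last n)) = false) :
    jumps f P ≤ winst t f :=
  le_csSup (winstSet_bdd t f) ⟨P, hP, h1, h2, rfl⟩

/-- the canonical geodesic from `x`, flipping coordinates in order. -/
def canonP {n : ℕ} (x : Fin n → Bool) : Fin (n+1) → Fin n → Bool :=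
  fun j ℓ => if (ℓ:ℕ) < (j:ℕ) then !(x ℓ) else x ℓ

lemma canonP_isGeodesic {n : ℕ} (x : Fin n → Bool) : IsGeodesic (canonP x) := by
  refine ⟨Equiv.refl _, ?_⟩
  intro j ℓ
  by_cases h : ℓ = j
  · subst h
    simp only [canonP, Equiv.refl_apply, if_pos rfl, Fin.val_succ, Fin.coe_castSucc]
    simp
  · simp only [canonP, Equiv.refl_apply, if_neg h, Fin.val_succ, Fin.coe_castSucc]
    have hne : (ℓ:ℕ) ≠ (j:ℕ) := fun hh => h (Fin.ext hh)
    rcases Nat.lt_or_ge (ℓ:ℕ) (j:ℕ) with hh | hh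
    · rw [if_pos (by omega), if_pos hh]; exact (if_neg h).symm
    · rw [if_neg (by omega), if_neg (by omega)]; exact (if_neg h).symm

lemma canonP_zero {n : ℕ} (x : Fin n → Bool) : canonP x 0 = x := by
  funext ℓ; simp [canonP]

lemma canonP_last {n : ℕ} (x : Fin n → Bool) : canonP x (Fin.last n) = fun ℓ => !(x ℓ) := by
  funext ℓ; simp [canonP, ℓ.isLt]

lemma onesCount_not {n : ℕ} (x : Fin n → Bool) :
    onesCount (fun ℓ => !(x ℓ)) = zerosCount x := by
  unfold onesCount zerosCount
  congr 1
  apply Finset.filter_congr; intro i _; simp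

lemma winstSet_nonempty {t : ℕ} (f : (Fin (2*t+2) → Bool) → Bool) :
    (winstSet t f).Nonempty := by
  by_cases hex : ∃ x : Fin (2*t+2) → Bool, onesCount x = t + 1 ∧ f x = true
  · obtain ⟨x, hx1, hx2⟩ := hex
    exact ⟨jumps f (canonP x), canonP x, canonP_isGeodesic x,
      by rw [canonP_zero]; exact hx1, Or.inl (by rw [canonP_zero]; exact hx2), rfl⟩
  · push_neg at hex
    obtain ⟨x, hx⟩ := exists_onesCount (n := 2*t+2) (k := t+1) (by omega)
    refine ⟨jumps f (canonP x), canonP x, canonP_isGeodesic x,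
      by rw [canonP_zero]; exact hx, Or.inr ?_, rfl⟩
    rw [canonP_last]
    have h1 : onesCount (fun ℓ => !(x ℓ)) = t + 1 := by
      rw [onesCount_not, zerosCount_eq, hx]; omega
    have := hex _ h1
    simpa using this

lemma winst_attained {t : ℕ} (f : (Fin (2*t+2) → Bool) → Bool) :
    ∃ P : Fin (2*t+2+1) → Fin (2*t+2) → Bool, IsGeodesic P ∧ onesCount (P 0) = t + 1 ∧
      (f (P 0) = true ∨ f (P (Fin.last (2*t+2))) = false) ∧ winst t f = jumps f P := by
  have h := Nat.sSup_mem (winstSet_nonempty f) (winstSet_bdd t f)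
  exact h


/-! ### permutations for the extended geodesics -/

def sigAPP {n : ℕ} (σ' : Equiv.Perm (Fin n)) : Equiv.Perm (Fin (n+2)) where
  toFun ℓ := if h : (ℓ:ℕ) < n then ⟨(σ' ⟨ℓ, h⟩ : ℕ), by have := (σ' ⟨ℓ,h⟩).isLt; omega⟩ else ℓ
  invFun j := if h : (j:ℕ) < n then ⟨(σ'.symm ⟨j, h⟩ : ℕ), by have := (σ'.symm ⟨j,h⟩).isLt; omega⟩ else j
  left_inv := by
    intro ℓ
    dsimp only
    by_cases h : (ℓ:ℕ) < n
    · rw [dif_pos h]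
      have h2 : ((σ' ⟨ℓ,h⟩ : Fin n) : ℕ) < n := (σ' _).isLt
      rw [dif_pos h2]
      apply Fin.ext
      simp
    · rw [dif_neg h, dif_neg h]
  right_inv := by
    intro ℓ
    dsimp only
    by_cases h : (ℓ:ℕ) < n
    · rw [dif_pos h]
      have h2 : ((σ'.symm ⟨ℓ,h⟩ : Fin n) : ℕ) < n := (σ'.symm _).isLt
      rw [dif_pos h2]
      apply Fin.ext
      simp
    · rw [dif_neg h, dif_neg h]

lemma sigAPP_lt {n : ℕ} (σ' : Equiv.Perm (Fin n)) (ℓ : Fin (n+2)) (h : (ℓ:ℕ) < n) :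
    ((sigAPP σ' ℓ : Fin (n+2)) : ℕ) = ((σ' ⟨ℓ, h⟩ : Fin n) : ℕ) := by
  simp [sigAPP, Equiv.coe_fn_mk, dif_pos h]

lemma sigAPP_ge {n : ℕ} (σ' : Equiv.Perm (Fin n)) (ℓ : Fin (n+2)) (h : ¬ (ℓ:ℕ) < n) :
    sigAPP σ' ℓ = ℓ := by
  simp [sigAPP, Equiv.coe_fn_mk, dif_neg h]

/-! ### the appended geodesic -/

def PAPP {n : ℕ} (P' : Fin (n+1) → Fin n → Bool) : Fin (n+3) → Fin (n+2) → Bool :=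
  fun j => if h : (j:ℕ) ≤ n then extPt true false (P' ⟨(j:ℕ), by omega⟩)
    else if (j:ℕ) = n+1 then extPt false false (P' (Fin.last n))
    else extPt false true (P' (Fin.last n))

lemma PAPP_le {n : ℕ} (P' : Fin (n+1) → Fin n → Bool) (j : Fin (n+3)) (h : (j:ℕ) ≤ n) :
    PAPP P' j = extPt true false (P' ⟨(j:ℕ), by omega⟩) := by
  simp [PAPP, dif_pos h]

lemma PAPP_n1 {n : ℕ} (P' : Fin (n+1) → Fin n → Bool) (j : Fin (n+3)) (h : (j:ℕ) = n+1) :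
    PAPP P' j = extPt false false (P' (Fin.last n)) := by
  have h' : ¬ (j:ℕ) ≤ n := by omega
  simp [PAPP, dif_neg h', h]

lemma PAPP_n2 {n : ℕ} (P' : Fin (n+1) → Fin n → Bool) (j : Fin (n+3)) (h : (j:ℕ) = n+2) :
    PAPP P' j = extPt false true (P' (Fin.last n)) := by
  have h' : ¬ (j:ℕ) ≤ n := by omega
  have h'' : ¬ (j:ℕ) = n+1 := by omega
  simp [PAPP, dif_neg h', h'']

lemma PAPP_isGeodesic {n : ℕ} (P' : Fin (n+1) → Fin n → Bool) (hP' : IsGeodesic P') :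
    IsGeodesic (PAPP P') := by
  obtain ⟨σ', hσ'⟩ := hP'
  refine ⟨sigAPP σ', ?_⟩
  intro j ℓ
  have hj3 : (j:ℕ) < n + 2 := j.isLt
  have hsv : ((j.succ : Fin (n+3)) : ℕ) = (j:ℕ) + 1 := rfl
  have hcv : ((j.castSucc : Fin (n+3)) : ℕ) = (j:ℕ) := rfl
  by_cases hℓ : (ℓ:ℕ) < n
  · -- embedded coordinate
    have hcond : (sigAPP σ' ℓ = j) ↔ ((σ' ⟨ℓ, hℓ⟩ : ℕ) = (j:ℕ)) := by
      rw [Fin.ext_iff, sigAPP_lt σ' ℓ hℓ]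
    by_cases hj : (j:ℕ) < n
    · -- both small steps
      have e1 : PAPP P' j.succ = extPt true false (P' ⟨(j:ℕ)+1, by omega⟩) := by
        rw [PAPP_le P' j.succ (by omega)]; rfl
      have e2 : PAPP P' j.castSucc = extPt true false (P' ⟨(j:ℕ), by omega⟩) := by
        rw [PAPP_le P' j.castSucc (by omega)]; rfl
      rw [e1, e2, extPt_lt _ _ _ _ hℓ, extPt_lt _ _ _ _ hℓ]
      have hsmall := hσ' ⟨(j:ℕ), hj⟩ ⟨(ℓ:ℕ), hℓ⟩
      have es : (⟨(j:ℕ), hj⟩ : Fin n).succ = (⟨(j:ℕ)+1, by omega⟩ : Fin (n+1)) := rfl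
      have ec : (⟨(j:ℕ), hj⟩ : Fin n).castSucc = (⟨(j:ℕ), by omega⟩ : Fin (n+1)) := rfl
      rw [es, ec] at hsmall
      rw [hsmall]
      have hcond2 : (σ' ⟨ℓ, hℓ⟩ = ⟨(j:ℕ), hj⟩) ↔ ((σ' ⟨ℓ, hℓ⟩ : ℕ) = (j:ℕ)) := Fin.ext_iff
      by_cases hc : ((σ' ⟨ℓ, hℓ⟩ : ℕ) = (j:ℕ))
      · rw [if_pos (hcond2.mpr hc), if_pos (hcond.mpr hc)]
      · rw [if_neg (fun hh => hc (hcond2.mp hh)), if_neg (fun hh => hc (hcond.mp hh))]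
    · -- j = n or n+1 : the small coordinate does not flip
      have hc : ¬ (sigAPP σ' ℓ = j) := by
        rw [hcond]; have := (σ' ⟨ℓ, hℓ⟩).isLt; omega
      rw [if_neg hc]
      rcases (by omega : (j:ℕ) = n ∨ (j:ℕ) = n+1) with hj' | hj'
      · rw [PAPP_le P' j.castSucc (by omega), PAPP_n1 P' j.succ (by omega)]
        rw [extPt_lt _ _ _ _ hℓ, extPt_lt _ _ _ _ hℓ]
        have : (⟨((j.castSucc : Fin (n+3)) : ℕ), by omega⟩ : Fin (n+1)) = Fin.last n := by
          apply Fin.ext; simp [hcv, hj']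
        rw [this]
      · rw [PAPP_n1 P' j.castSucc (by omega), PAPP_n2 P' j.succ (by omega)]
        rw [extPt_lt _ _ _ _ hℓ, extPt_lt _ _ _ _ hℓ]
  · -- coordinate n or n+1
    have hσℓ : sigAPP σ' ℓ = ℓ := sigAPP_ge σ' ℓ hℓ
    have hcond : (sigAPP σ' ℓ = j) ↔ ((ℓ:ℕ) = (j:ℕ)) := by rw [hσℓ, Fin.ext_iff]
    rcases (by have := ℓ.isLt; omega : (ℓ:ℕ) = n ∨ (ℓ:ℕ) = n+1) with hℓ' | hℓ'
    · -- coordinate n : flips at step n+1 (index n)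
      rcases (by omega : (j:ℕ) < n ∨ (j:ℕ) = n ∨ (j:ℕ) = n+1) with hj | hj | hj
      · rw [if_neg (fun hh => by have := hcond.mp hh; omega)]
        rw [PAPP_le P' j.succ (by omega), PAPP_le P' j.castSucc (by omega)]
        rw [extPt_n _ _ _ _ hℓ', extPt_n _ _ _ _ hℓ']
      · rw [if_pos (hcond.mpr (by omega))]
        rw [PAPP_n1 P' j.succ (by omega), PAPP_le P' j.castSucc (by omega)]
        rw [extPt_n _ _ _ _ hℓ', extPt_n _ _ _ _ hℓ']
        rfl
      · rw [if_neg (fun hh => by have := hcond.mp hh; omega)]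
        rw [PAPP_n2 P' j.succ (by omega), PAPP_n1 P' j.castSucc (by omega)]
        rw [extPt_n _ _ _ _ hℓ', extPt_n _ _ _ _ hℓ']
    · -- coordinate n+1 : flips at the last step (index n+1)
      rcases (by omega : (j:ℕ) < n ∨ (j:ℕ) = n ∨ (j:ℕ) = n+1) with hj | hj | hj
      · rw [if_neg (fun hh => by have := hcond.mp hh; omega)]
        rw [PAPP_le P' j.succ (by omega), PAPP_le P' j.castSucc (by omega)]
        rw [extPt_n1 _ _ _ _ hℓ', extPt_n1 _ _ _ _ hℓ']
      · rw [if_neg (fun hh => by have := hcond.mp hh; omega)]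
        rw [PAPP_n1 P' j.succ (by omega), PAPP_le P' j.castSucc (by omega)]
        rw [extPt_n1 _ _ _ _ hℓ', extPt_n1 _ _ _ _ hℓ']
      · rw [if_pos (hcond.mpr (by omega))]
        rw [PAPP_n2 P' j.succ (by omega), PAPP_n1 P' j.castSucc (by omega)]
        rw [extPt_n1 _ _ _ _ hℓ', extPt_n1 _ _ _ _ hℓ']
        rfl

/-! ### generic jump counting for extended geodesics -/

lemma jumps_ext_ge {n : ℕ} (f : (Fin (n+2) → Bool) → Bool)
    (P : Fin (n+3) → Fin (n+2) → Bool)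
    (f' : (Fin n → Bool) → Bool) (P' : Fin (n+1) → Fin n → Bool)
    (e : Fin (n+2)) (ι : Fin n → Fin (n+2)) (hι : Function.Injective ι)
    (hιe : ∀ s, ι s ≠ e)
    (hcorr : ∀ s : Fin n,
      (f (P (ι s).succ) ≠ f (P (ι s).castSucc)) ↔ (f' (P' s.succ) ≠ f' (P' s.castSucc)))
    (hq : f (P e.succ) ≠ f (P e.castSucc)) :
    jumps f' P' + 1 ≤ jumps f P := by
  classical
  unfold jumps
  have hsub : insert e ((univ.filter fun s : Fin n =>
        f' (P' s.succ) ≠ f' (P' s.castSucc)).image ι)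
      ⊆ univ.filter (fun j : Fin (n+2) => f (P j.succ) ≠ f (P j.castSucc)) := by
    intro j hj
    rcases Finset.mem_insert.mp hj with rfl | hj
    · exact Finset.mem_filter.mpr ⟨Finset.mem_univ _, hq⟩
    · obtain ⟨s, hs, rfl⟩ := Finset.mem_image.mp hj
      have hs' := (Finset.mem_filter.mp hs).2
      exact Finset.mem_filter.mpr ⟨Finset.mem_univ _, (hcorr s).mpr hs'⟩
  have hcard := Finset.card_le_card hsub
  rw [Finset.card_insert_of_notMem (by
    intro hmem
    obtain ⟨s, _, hs⟩ := Finset.mem_image.mp hmem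
    exact hιe s hs)] at hcard
  rw [Finset.card_image_of_injective _ hι] at hcard
  omega

/-! ### the prepended geodesic -/

def PPRE {n : ℕ} (b : Bool) (P' : Fin (n+1) → Fin n → Bool) : Fin (n+3) → Fin (n+2) → Bool :=
  fun j => if (j:ℕ) = 0 then extPt false true (P' 0)
    else if (j:ℕ) = 1 then extPt b b (P' 0)
    else extPt true false (P' ⟨(j:ℕ)-2, by have := j.isLt; omega⟩)

lemma PPRE_0 {n : ℕ} (b : Bool) (P' : Fin (n+1) → Fin n → Bool) (j : Fin (n+3))
    (h : (j:ℕ) = 0) : PPRE b P' j = extPt false true (P' 0) := by simp [PPRE, h]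

lemma PPRE_1 {n : ℕ} (b : Bool) (P' : Fin (n+1) → Fin n → Bool) (j : Fin (n+3))
    (h : (j:ℕ) = 1) : PPRE b P' j = extPt b b (P' 0) := by simp [PPRE, h]

lemma PPRE_ge {n : ℕ} (b : Bool) (P' : Fin (n+1) → Fin n → Bool) (j : Fin (n+3))
    (h : 2 ≤ (j:ℕ)) (h2 : (j:ℕ) - 2 < n + 1) :
    PPRE b P' j = extPt true false (P' ⟨(j:ℕ)-2, h2⟩) := by
  have h0 : ¬ (j:ℕ) = 0 := by omega
  have h1 : ¬ (j:ℕ) = 1 := by omega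
  simp [PPRE, h0, h1]

def gPRE {n : ℕ} (b : Bool) (σ' : Equiv.Perm (Fin n)) : Fin (n+2) → Fin (n+2) :=
  fun ℓ => if h : (ℓ:ℕ) < n then
      ⟨((σ' ⟨ℓ, h⟩ : Fin n) : ℕ) + 2, by have := (σ' ⟨ℓ,h⟩).isLt; omega⟩
    else if (ℓ:ℕ) = n then (if b then ⟨0, by omega⟩ else ⟨1, by omega⟩)
    else (if b then ⟨1, by omega⟩ else ⟨0, by omega⟩)

lemma gPRE_val_lt {n : ℕ} (b : Bool) (σ' : Equiv.Perm (Fin n)) (ℓ : Fin (n+2))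
    (h : (ℓ:ℕ) < n) : ((gPRE b σ' ℓ) : ℕ) = ((σ' ⟨ℓ, h⟩ : Fin n) : ℕ) + 2 := by
  unfold gPRE; rw [dif_pos h]

lemma gPRE_val_n {n : ℕ} (b : Bool) (σ' : Equiv.Perm (Fin n)) (ℓ : Fin (n+2))
    (h : (ℓ:ℕ) = n) : ((gPRE b σ' ℓ) : ℕ) = if b then 0 else 1 := by
  unfold gPRE; rw [dif_neg (by omega), if_pos h]; cases b <;> simp

lemma gPRE_val_n1 {n : ℕ} (b : Bool) (σ' : Equiv.Perm (Fin n)) (ℓ : Fin (n+2))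
    (h : (ℓ:ℕ) = n+1) : ((gPRE b σ' ℓ) : ℕ) = if b then 1 else 0 := by
  unfold gPRE; rw [dif_neg (by omega), if_neg (by omega)]; cases b <;> simp

lemma gPRE_inj {n : ℕ} (b : Bool) (σ' : Equiv.Perm (Fin n)) :
    Function.Injective (gPRE b σ') := by
  intro a a' hh
  have hv : ((gPRE b σ' a) : ℕ) = ((gPRE b σ' a') : ℕ) := congrArg Fin.val hh
  have ha3 := a.isLt
  have ha3' := a'.isLt
  by_cases h1 : (a:ℕ) < n <;> by_cases h2 : (a':ℕ) < n
  · rw [gPRE_val_lt b σ' a h1, gPRE_val_lt b σ' a' h2] at hv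
    have : σ' ⟨a, h1⟩ = σ' ⟨a', h2⟩ := Fin.ext (by omega)
    have h3 := σ'.injective this
    have h4 : (a:ℕ) = (a':ℕ) := by
      have := congrArg Fin.val h3
      simpa using this
    exact Fin.ext h4
  · rw [gPRE_val_lt b σ' a h1] at hv
    rcases (by omega : (a':ℕ) = n ∨ (a':ℕ) = n+1) with h' | h' <;>
      [rw [gPRE_val_n b σ' a' h'] at hv; rw [gPRE_val_n1 b σ' a' h'] at hv] <;>
      cases b <;> simp at hv <;> omega
  · rw [gPRE_val_lt b σ' a' h2] at hv
    rcases (by omega : (a:ℕ) = n ∨ (a:ℕ) = n+1) with h' | h' <;>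
      [rw [gPRE_val_n b σ' a h'] at hv; rw [gPRE_val_n1 b σ' a h'] at hv] <;>
      cases b <;> simp at hv <;> omega
  · rcases (by omega : (a:ℕ) = n ∨ (a:ℕ) = n+1) with h' | h' <;>
      rcases (by omega : (a':ℕ) = n ∨ (a':ℕ) = n+1) with h'' | h''
    · exact Fin.ext (by omega)
    · rw [gPRE_val_n b σ' a h', gPRE_val_n1 b σ' a' h''] at hv
      cases b <;> simp at hv
    · rw [gPRE_val_n1 b σ' a h', gPRE_val_n b σ' a' h''] at hv
      cases b <;> simp at hv
    · exact Fin.ext (by omega)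

noncomputable def sigPRE {n : ℕ} (b : Bool) (σ' : Equiv.Perm (Fin n)) :
    Equiv.Perm (Fin (n+2)) :=
  Equiv.ofBijective (gPRE b σ') (Finite.injective_iff_bijective.mp (gPRE_inj b σ'))

lemma sigPRE_apply {n : ℕ} (b : Bool) (σ' : Equiv.Perm (Fin n)) (ℓ : Fin (n+2)) :
    sigPRE b σ' ℓ = gPRE b σ' ℓ := rfl

set_option maxHeartbeats 1000000 in
lemma PPRE_isGeodesic {n : ℕ} (b : Bool) (P' : Fin (n+1) → Fin n → Bool)
    (hP' : IsGeodesic P') : IsGeodesic (PPRE b P') := by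
  obtain ⟨σ', hσ'⟩ := hP'
  refine ⟨sigPRE b σ', ?_⟩
  intro j ℓ
  have hj3 : (j:ℕ) < n + 2 := j.isLt
  have hsv : ((j.succ : Fin (n+3)) : ℕ) = (j:ℕ) + 1 := rfl
  have hcv : ((j.castSucc : Fin (n+3)) : ℕ) = (j:ℕ) := rfl
  rw [sigPRE_apply]
  by_cases hℓ : (ℓ:ℕ) < n
  · -- embedded coordinate
    have hcond : (gPRE b σ' ℓ = j) ↔ ((σ' ⟨ℓ, hℓ⟩ : ℕ) + 2 = (j:ℕ)) := by
      rw [Fin.ext_iff, gPRE_val_lt b σ' ℓ hℓ]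
    rcases (by omega : (j:ℕ) = 0 ∨ (j:ℕ) = 1 ∨ 2 ≤ (j:ℕ)) with hj | hj | hj
    · rw [if_neg (fun hh => by have := hcond.mp hh; omega)]
      rw [PPRE_1 b P' j.succ (by omega), PPRE_0 b P' j.castSucc (by omega)]
      rw [extPt_lt _ _ _ _ hℓ, extPt_lt _ _ _ _ hℓ]
    · rw [if_neg (fun hh => by have := hcond.mp hh; omega)]
      rw [PPRE_ge b P' j.succ (by omega) (by omega), PPRE_1 b P' j.castSucc (by omega)]
      rw [extPt_lt _ _ _ _ hℓ, extPt_lt _ _ _ _ hℓ]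
      have e0 : (⟨(↑(j.succ) : ℕ) - 2, by omega⟩ : Fin (n+1)) = 0 := Fin.ext (by simp [hsv]; omega)
      rw [e0]
    · -- main run
      have hjn : (j:ℕ) - 2 < n := by omega
      rw [PPRE_ge b P' j.succ (by omega) (by omega), PPRE_ge b P' j.castSucc (by omega) (by omega)]
      rw [extPt_lt _ _ _ _ hℓ, extPt_lt _ _ _ _ hℓ]
      have hsmall := hσ' ⟨(j:ℕ) - 2, hjn⟩ ⟨(ℓ:ℕ), hℓ⟩
      have es : ((⟨(j:ℕ) - 2, hjn⟩ : Fin n)).succ = (⟨(↑(j.succ) : ℕ) - 2, by omega⟩ : Fin (n+1)) :=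
        Fin.ext (by simp [hsv]; omega)
      have ec : ((⟨(j:ℕ) - 2, hjn⟩ : Fin n)).castSucc = (⟨(↑(j.castSucc) : ℕ) - 2, by omega⟩ : Fin (n+1)) :=
        Fin.ext (by simp [hcv])
      rw [es, ec] at hsmall
      rw [hsmall]
      have hcond2 : (σ' ⟨ℓ, hℓ⟩ = ⟨(j:ℕ) - 2, hjn⟩) ↔ ((σ' ⟨ℓ, hℓ⟩ : ℕ) = (j:ℕ) - 2) := Fin.ext_iff
      by_cases hc : ((σ' ⟨ℓ, hℓ⟩ : ℕ) = (j:ℕ) - 2)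
      · rw [if_pos (hcond2.mpr hc), if_pos (hcond.mpr (by omega))]
      · rw [if_neg (fun hh => hc (hcond2.mp hh)),
          if_neg (fun hh => by have := hcond.mp hh; omega)]
  · rcases (by have := ℓ.isLt; omega : (ℓ:ℕ) = n ∨ (ℓ:ℕ) = n+1) with hℓ' | hℓ'
    · -- coordinate n : value false,b,true,true,...  flips at step (if b then 0 else 1)
      have hcond : (gPRE b σ' ℓ = j) ↔ ((if b then 0 else 1) = (j:ℕ)) := by
        rw [Fin.ext_iff, gPRE_val_n b σ' ℓ hℓ']
      rcases (by omega : (j:ℕ) = 0 ∨ (j:ℕ) = 1 ∨ 2 ≤ (j:ℕ)) with hj | hj | hj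
      · rw [PPRE_1 b P' j.succ (by omega), PPRE_0 b P' j.castSucc (by omega)]
        rw [extPt_n _ _ _ _ hℓ', extPt_n _ _ _ _ hℓ']
        cases b
        · rw [if_neg (fun hh => by have := hcond.mp hh; simp at this; omega)]
        · rw [if_pos (hcond.mpr (by simp; omega))]; rfl
      · rw [PPRE_ge b P' j.succ (by omega) (by omega), PPRE_1 b P' j.castSucc (by omega)]
        rw [extPt_n _ _ _ _ hℓ', extPt_n _ _ _ _ hℓ']
        cases b
        · rw [if_pos (hcond.mpr (by simp; omega))]; rfl
        · rw [if_neg (fun hh => by have := hcond.mp hh; simp at this; omega)]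
      · rw [PPRE_ge b P' j.succ (by omega) (by omega), PPRE_ge b P' j.castSucc (by omega) (by omega)]
        rw [extPt_n _ _ _ _ hℓ', extPt_n _ _ _ _ hℓ']
        rw [if_neg (fun hh => by have := hcond.mp hh; cases b <;> simp at this <;> omega)]
    · -- coordinate n+1 : value true,b,false,false,... flips at step (if b then 1 else 0)
      have hcond : (gPRE b σ' ℓ = j) ↔ ((if b then 1 else 0) = (j:ℕ)) := by
        rw [Fin.ext_iff, gPRE_val_n1 b σ' ℓ hℓ']
      rcases (by omega : (j:ℕ) = 0 ∨ (j:ℕ) = 1 ∨ 2 ≤ (j:ℕ)) with hj | hj | hj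
      · rw [PPRE_1 b P' j.succ (by omega), PPRE_0 b P' j.castSucc (by omega)]
        rw [extPt_n1 _ _ _ _ hℓ', extPt_n1 _ _ _ _ hℓ']
        cases b
        · rw [if_pos (hcond.mpr (by simp; omega))]; rfl
        · rw [if_neg (fun hh => by have := hcond.mp hh; simp at this; omega)]
      · rw [PPRE_ge b P' j.succ (by omega) (by omega), PPRE_1 b P' j.castSucc (by omega)]
        rw [extPt_n1 _ _ _ _ hℓ', extPt_n1 _ _ _ _ hℓ']
        cases b
        · rw [if_neg (fun hh => by have := hcond.mp hh; simp at this; omega)]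
        · rw [if_pos (hcond.mpr (by simp; omega))]; rfl
      · rw [PPRE_ge b P' j.succ (by omega) (by omega), PPRE_ge b P' j.castSucc (by omega) (by omega)]
        rw [extPt_n1 _ _ _ _ hℓ', extPt_n1 _ _ _ _ hℓ']
        rw [if_neg (fun hh => by have := hcond.mp hh; cases b <;> simp at this <;> omega)]

lemma PAPP_0 {n : ℕ} (P' : Fin (n+1) → Fin n → Bool) :
    PAPP P' 0 = extPt true false (P' 0) := by
  rw [PAPP_le P' 0 (by simp)]
  all_goals (refine congrArg _ (congrArg P' (Fin.ext ?_)); simp [Fin.val_succ] <;> omega)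

lemma PAPP_last {n : ℕ} (P' : Fin (n+1) → Fin n → Bool) :
    PAPP P' (Fin.last (n+2)) = extPt false true (P' (Fin.last n)) :=
  PAPP_n2 P' _ (by simp)

lemma PPRE_zero {n : ℕ} (b : Bool) (P' : Fin (n+1) → Fin n → Bool) :
    PPRE b P' 0 = extPt false true (P' 0) := PPRE_0 b P' 0 rfl

lemma PPRE_last {n : ℕ} (b : Bool) (P' : Fin (n+1) → Fin n → Bool) :
    PPRE b P' (Fin.last (n+2)) = extPt true false (P' (Fin.last n)) := by
  rw [PPRE_ge b P' _ (by simp) (by simp)]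
  all_goals (refine congrArg _ (congrArg P' (Fin.ext ?_)); simp [Fin.val_succ] <;> omega)

lemma jumps_PAPP {n : ℕ} (f : (Fin (n+2) → Bool) → Bool) (P' : Fin (n+1) → Fin n → Bool)
    (h1 : f (extPt false false (P' (Fin.last n))) ≠ f (extPt true false (P' (Fin.last n)))) :
    jumps (fun y => f (extPt true false y)) P' + 1 ≤ jumps f (PAPP P') := by
  refine jumps_ext_ge f (PAPP P') _ P' (⟨n, by omega⟩ : Fin (n+2))
    (fun s => ⟨(s:ℕ), by have := s.isLt; omega⟩) ?_ ?_ ?_ ?_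
  · intro a b hab
    exact Fin.ext (by simpa using congrArg Fin.val hab)
  · intro s
    have := s.isLt
    intro hh
    have := congrArg Fin.val hh
    simp at this
    omega
  · intro s
    have hs := s.isLt
    have e1 : PAPP P' (⟨(s:ℕ), by omega⟩ : Fin (n+2)).succ
        = extPt true false (P' s.succ) := by
      rw [PAPP_le P' _ (by simp [Fin.val_succ]; try omega)]
      all_goals (refine congrArg _ (congrArg P' (Fin.ext ?_)); simp [Fin.val_succ] <;> omega)
    have e2 : PAPP P' (⟨(s:ℕ), by omega⟩ : Fin (n+2)).castSucc
        = extPt true false (P' s.castSucc) := by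
      rw [PAPP_le P' _ (by simp; try omega)]
      all_goals (refine congrArg _ (congrArg P' (Fin.ext ?_)); simp [Fin.val_succ] <;> omega)
    rw [e1, e2]
  · have e1 : PAPP P' (⟨n, by omega⟩ : Fin (n+2)).succ
        = extPt false false (P' (Fin.last n)) := by
      rw [PAPP_n1 P' _ (by simp)]
    have e2 : PAPP P' (⟨n, by omega⟩ : Fin (n+2)).castSucc
        = extPt true false (P' (Fin.last n)) := by
      rw [PAPP_le P' _ (by simp)]
      all_goals (refine congrArg _ (congrArg P' (Fin.ext ?_)); simp [Fin.val_succ] <;> omega)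
    rw [e1, e2]
    exact h1

lemma jumps_PPRE {n : ℕ} (b : Bool) (f : (Fin (n+2) → Bool) → Bool)
    (P' : Fin (n+1) → Fin n → Bool)
    (h1 : f (extPt b b (P' 0)) ≠ f (extPt false true (P' 0)) ∨
          f (extPt true false (P' 0)) ≠ f (extPt b b (P' 0))) :
    jumps (fun y => f (extPt true false y)) P' + 1 ≤ jumps f (PPRE b P') := by
  have hcorr : ∀ s : Fin n,
      (f (PPRE b P' ((⟨(s:ℕ)+2, by have := s.isLt; omega⟩ : Fin (n+2))).succ) ≠
        f (PPRE b P' ((⟨(s:ℕ)+2, by have := s.isLt; omega⟩ : Fin (n+2))).castSucc)) ↔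
      ((fun y => f (extPt true false y)) (P' s.succ) ≠
        (fun y => f (extPt true false y)) (P' s.castSucc)) := by
    intro s
    have hs := s.isLt
    have e1 : PPRE b P' (⟨(s:ℕ)+2, by omega⟩ : Fin (n+2)).succ
        = extPt true false (P' s.succ) := by
      rw [PPRE_ge b P' _ (by simp) (by simp; try omega)]
      all_goals (refine congrArg _ (congrArg P' (Fin.ext ?_)); simp [Fin.val_succ] <;> omega)
    have e2 : PPRE b P' (⟨(s:ℕ)+2, by omega⟩ : Fin (n+2)).castSucc
        = extPt true false (P' s.castSucc) := by
      rw [PPRE_ge b P' _ (by simp) (by simp; try omega)]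
      all_goals (refine congrArg _ (congrArg P' (Fin.ext ?_)); simp [Fin.val_succ] <;> omega)
    rw [e1, e2]
  rcases h1 with h1 | h1
  · refine jumps_ext_ge f (PPRE b P') _ P' (⟨0, by omega⟩ : Fin (n+2))
      (fun s => ⟨(s:ℕ)+2, by have := s.isLt; omega⟩) ?_ ?_ ?_ ?_
    · intro a b hab
      exact Fin.ext (by simpa using congrArg Fin.val hab)
    · intro s hh
      have := congrArg Fin.val hh
      simp at this
    · exact hcorr
    · have e1 : PPRE b P' (⟨0, by omega⟩ : Fin (n+2)).succ = extPt b b (P' 0) :=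
        PPRE_1 b P' _ rfl
      have e2 : PPRE b P' (⟨0, by omega⟩ : Fin (n+2)).castSucc = extPt false true (P' 0) :=
        PPRE_0 b P' _ rfl
      rw [e1, e2]
      exact h1
  · refine jumps_ext_ge f (PPRE b P') _ P' (⟨1, by omega⟩ : Fin (n+2))
      (fun s => ⟨(s:ℕ)+2, by have := s.isLt; omega⟩) ?_ ?_ ?_ ?_
    · intro a b hab
      exact Fin.ext (by simpa using congrArg Fin.val hab)
    · intro s hh
      have := congrArg Fin.val hh
      simp at this
    · exact hcorr
    · have e1 : PPRE b P' (⟨1, by omega⟩ : Fin (n+2)).succ = extPt true false (P' 0) := by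
        rw [PPRE_ge b P' _ (by show 2 ≤ 1 + 1; omega) (by show 1 + 1 - 2 < n + 1; omega)]
        all_goals (refine congrArg _ (congrArg P' (Fin.ext ?_)); show (1 + 1 - 2 : ℕ) = ((0 : Fin (n+1)) : ℕ); simp)
      have e2 : PPRE b P' (⟨1, by omega⟩ : Fin (n+2)).castSucc = extPt b b (P' 0) :=
        PPRE_1 b P' _ rfl
      rw [e1, e2]
      exact h1

/-- the last point of a geodesic is the complement of the first -/
lemma geodesic_last {n : ℕ} (P : Fin (n+1) → Fin n → Bool) (hP : IsGeodesic P) :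
    ∀ ℓ, P (Fin.last n) ℓ = !(P 0 ℓ) := by
  obtain ⟨σ, hσ⟩ := hP
  have key : ∀ k : Fin (n+1), ∀ ℓ, P k ℓ = if ((σ ℓ : Fin n) : ℕ) < (k:ℕ) then !(P 0 ℓ) else P 0 ℓ := by
    intro k
    induction k using Fin.induction with
    | zero => intro ℓ; simp
    | succ i ih =>
      intro ℓ
      rw [hσ i ℓ, ih ℓ]
      by_cases hc : σ ℓ = i
      · rw [if_pos hc, if_neg (by rw [hc]; simp), if_pos (by rw [hc]; simp [Fin.val_succ])]
      · have hne : ((σ ℓ : Fin n) : ℕ) ≠ (i:ℕ) := fun hh => hc (Fin.ext hh)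
        rw [if_neg hc]
        by_cases hlt : ((σ ℓ : Fin n) : ℕ) < (i:ℕ)
        · rw [if_pos (by simpa using hlt), if_pos (by simp [Fin.val_succ]; omega)]
        · rw [if_neg (by simpa using hlt), if_neg (by simp [Fin.val_succ]; omega)]
  intro ℓ
  rw [key (Fin.last n) ℓ, if_pos (by simp [(σ ℓ).isLt])]

lemma red (t : ℕ) (f : (Fin (2*t+2+2) → Bool) → Bool) (hf : tfEq f (t+1)) :
    ∃ f' : (Fin (2*t+2) → Bool) → Bool, tfEq f' t ∧ winst t f' + 1 ≤ winst (t+1) f := by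
  have hn : (2*t+2) = 2*t+2 := rfl
  set f' : (Fin (2*t+2) → Bool) → Bool := fun y => f (extPt true false y) with hf'def
  have hone : ∀ y : Fin (2*t+2) → Bool, onesCount (extPt true false y) = onesCount y + 1 := by
    intro y; rw [onesCount_extPt]; simp
  have hf'resp : Respects t f' := by
    constructor
    · intro y hy
      apply hf.1.1
      rw [hone]; omega
    · intro y hy
      apply hf.1.2
      have h1 := onesCount_le y
      have h2 : zerosCount y = 2*t+2 - onesCount y := zerosCount_eq y
      rw [zerosCount_eq, hone]
      omega
  have hf'not : ¬ Respects (t+1) f' := by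
    rintro ⟨h1, h2⟩
    obtain ⟨x, hx⟩ := exists_onesCount (n := 2*t+2) (k := t+1) (by omega)
    have e1 := h1 x (by omega)
    have e2 := h2 x (by rw [zerosCount_eq, hx]; omega)
    rw [e1] at e2
    exact Bool.false_ne_true e2
  obtain ⟨P', hgeo, hones, hwell, heq⟩ := winst_attained (t := t) f'
  set x0 := P' 0 with hx0def
  set L := P' (Fin.last (2*t+2)) with hLdef
  have hLones : onesCount L = t + 1 := by
    have hcompl : L = fun ℓ => !(x0 ℓ) := funext (geodesic_last P' hgeo)
    rw [hcompl, onesCount_not, zerosCount_eq, hones]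
    omega
  have cFFL : f (extPt false false L) = false := by
    apply hf.1.1
    rw [onesCount_extPt, hLones]; simp
  have cFFx0 : f (extPt false false x0) = false := by
    apply hf.1.1
    rw [onesCount_extPt, hones]; simp
  have cTTx0 : f (extPt true true x0) = true := by
    apply hf.1.2
    rw [zerosCount_eq, onesCount_extPt, hones]
    simp
    omega
  refine ⟨f', ⟨hf'resp, hf'not⟩, ?_⟩
  rw [heq]
  have hTL : f (extPt true false L) = f' L := rfl
  have hTx0 : f (extPt true false x0) = f' x0 := rfl
  by_cases hL : f' L = true
  · -- append two steps at the end
    have hx0T : f' x0 = true := by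
      rcases hwell with h | h
      · exact h
      · rw [h] at hL; exact absurd hL (by simp)
    have hj : jumps f' P' + 1 ≤ jumps f (PAPP P') := by
      apply jumps_PAPP f P'
      rw [cFFL, hTL, hL]
      simp
    refine le_trans hj (le_winst (t+1) f (PAPP P') (PAPP_isGeodesic P' hgeo) ?_ ?_)
    · rw [PAPP_0, onesCount_extPt, hones]
      simp
    · left
      rw [PAPP_0, hTx0, hx0T]
  · have hLF : f' L = false := by
      cases hb : f' L
      · rfl
      · exact absurd hb hL
    have hwellPre : ∀ b : Bool, f (PPRE b P' 0) = true ∨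
        f (PPRE b P' (Fin.last (2*t+2+2))) = false := by
      intro b
      right
      rw [PPRE_last, hTL, hLF]
    have honesPre : ∀ b : Bool, onesCount (PPRE b P' 0) = (t+1) + 1 := by
      intro b
      rw [PPRE_zero, onesCount_extPt, hones]
      simp
    by_cases hx0 : f' x0 = true
    · have hj : jumps f' P' + 1 ≤ jumps f (PPRE false P') := by
        apply jumps_PPRE false f P'
        right
        rw [hTx0, hx0, cFFx0]
        simp
      exact le_trans hj (le_winst (t+1) f (PPRE false P') (PPRE_isGeodesic false P' hgeo)
        (honesPre false) (hwellPre false))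
    · by_cases hc : f (extPt false true x0) = true
      · have hj : jumps f' P' + 1 ≤ jumps f (PPRE false P') := by
          apply jumps_PPRE false f P'
          left
          rw [cFFx0, hc]
          simp
        exact le_trans hj (le_winst (t+1) f (PPRE false P') (PPRE_isGeodesic false P' hgeo)
          (honesPre false) (hwellPre false))
      · have hcF : f (extPt false true x0) = false := by
          cases hb : f (extPt false true x0)
          · rfl
          · exact absurd hb hc
        have hj : jumps f' P' + 1 ≤ jumps f (PPRE true P') := by
          apply jumps_PPRE true f P'
          left
          rw [cTTx0, hcF]
          simp
        exact le_trans hj (le_winst (t+1) f (PPRE true P') (PPRE_isGeodesic true P' hgeo)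
          (honesPre true) (hwellPre true))

/-- If every colouring `f₀` of `H_{2t₀+2}` with `t_{f₀} = t₀` satisfies
`winst f₀ ≥ y₀`, then for every `t ≥ t₀`, every colouring `f` of `H_{2t+2}` with
`t_f = t` satisfies `winst f ≥ y₀ + t - t₀`. -/
theorem winst_stronger (y0 t0 t : ℕ) (ht : t0 ≤ t)
    (h : ∀ f0 : (Fin (2 * t0 + 2) → Bool) → Bool, tfEq f0 t0 → y0 ≤ winst t0 f0) :
    ∀ f : (Fin (2 * t + 2) → Bool) → Bool, tfEq f t → y0 + (t - t0) ≤ winst t f := by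

  obtain ⟨d, rfl⟩ : ∃ d, t = t0 + d := ⟨t - t0, by omega⟩
  have key : ∀ d, ∀ f : (Fin (2*(t0+d)+2) → Bool) → Bool, tfEq f (t0+d) →
      y0 + d ≤ winst (t0+d) f := by
    intro d
    induction d with
    | zero => intro f hf; simpa using h f hf
    | succ d ih =>
      intro f hf
      obtain ⟨f', hf', hw⟩ := red (t0+d) f hf
      have h1 := ih f' hf'
      have h2 : winst (t0+d) f' + 1 ≤ winst (t0+(d+1)) f := hw
      omega
  intro f hf
  have hd := key d f hf
  have he : t0 + d - t0 = d := by omega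
  rw [he]
  exact hd
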